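/- For every n there exists a (cyclic) USO ψ of the n-cube that is not i-nice for any i < n; concretely, one can construct ψ so that every vertex except the global sink has full reachmap [n], whence the vertex antipodal to the sink is only n-covered. -/

import Mathlib

open Finset

/-- A directed step in the orientation given by outmap `s`:
from `v` along an outgoing coordinate `j`. -/
def USO.Step {n : ℕ} (s : Finset (Fin n) → Finset (Fin n))
    (v u : Finset (Fin n)) : Prop :=
  ∃ j, j ∈ s v ∧ u = symmDiff v {j}

/-- Reachability along directed paths. -/
def USO.Reach {n : ℕ} (s : Finset (Fin n) → Finset (Fin n)) :
    Finset (Fin n) → Finset (Fin n) → Prop :=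
  Relation.ReflTransGen (USO.Step s)

/-- Existence of a directed path of length exactly `k`. -/
def USO.StepN {n : ℕ} (s : Finset (Fin n) → Finset (Fin n)) :
    ℕ → Finset (Fin n) → Finset (Fin n) → Prop
  | 0, v, u => v = u
  | k + 1, v, u => ∃ w, USO.Step s v w ∧ USO.StepN s k w u

/-- `s` is (the outmap of) a unique sink orientation of the `n`-cube:
every face `F_{J,v} = {u : v ∆ u ⊆ J}` has a unique sink. -/
def IsUSO {n : ℕ} (s : Finset (Fin n) → Finset (Fin n)) : Prop :=
  ∀ J v : Finset (Fin n), ∃! u, symmDiff v u ⊆ J ∧ s u ∩ J = ∅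

/-- The reachmap of `v`: all coordinates outgoing at some vertex reachable from `v`. -/
def reachmap {n : ℕ} (s : Finset (Fin n) → Finset (Fin n))
    (v : Finset (Fin n)) : Set (Fin n) :=
  {j | ∃ u, USO.Reach s v u ∧ j ∈ s u}

/-- `s` is `i`-nice: every non-sink vertex has a directed path of length at most `i`
to a vertex of strictly smaller reachmap. -/
def IsNice {n : ℕ} (i : ℕ) (s : Finset (Fin n) → Finset (Fin n)) : Prop :=
  ∀ v, s v ≠ ∅ → ∃ u, (∃ k ≤ i, USO.StepN s k v u) ∧ reachmap s u ⊂ reachmap s v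

/-- Acyclicity of the orientation. -/
def IsAcyclic {n : ℕ} (s : Finset (Fin n) → Finset (Fin n)) : Prop :=
  ∀ v u, USO.Reach s v u → USO.Reach s u v → v = u

variable {n : ℕ} [NeZero n]

def Dd (n : ℕ) [NeZero n] (v : Finset (Fin n)) : Finset (Fin n) :=
  Finset.univ.filter (fun j => ∃ k : Fin n, j = k + 1 ∧
    (v = ({k} : Finset (Fin n))ᶜ ∨ v = ({k, k+1} : Finset (Fin n))ᶜ))

def Ss (n : ℕ) [NeZero n] (v : Finset (Fin n)) : Finset (Fin n) := symmDiff vᶜ (Dd n v)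

lemma fin_val_add_one (hn : 2 ≤ n) (k : Fin n) :
    (k + 1 : Fin n).val = k.val + 1 ∨ ((k + 1 : Fin n).val = 0 ∧ k.val = n - 1) := by
  have h1 : ((k + 1 : Fin n)).val = (k.val + 1) % n := by
    rw [Fin.add_def]
    simp [Fin.val_one', Nat.mod_eq_of_lt (show 1 < n by omega)]
  have := k.isLt
  rcases Nat.lt_or_ge (k.val + 1) n with h' | h'
  · left; rw [h1, Nat.mod_eq_of_lt h']
  · right
    have : k.val + 1 = n := by omega
    rw [h1, this, Nat.mod_self]
    omega

lemma fin_add_one_ne (hn : 3 ≤ n) (k : Fin n) : k + 1 ≠ k := by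
  intro h
  rcases fin_val_add_one (by omega) k with h1 | ⟨h1, h2⟩ <;> rw [h] at h1 <;> omega

lemma fin_add_two_ne (hn : 3 ≤ n) (k : Fin n) : k + 1 + 1 ≠ k := by
  intro h
  have := k.isLt
  rcases fin_val_add_one (by omega) (k+1) with h1 | ⟨h1, h2⟩ <;>
    rcases fin_val_add_one (by omega) k with h3 | ⟨h3, h4⟩ <;> rw [h] at h1 <;> omega

lemma compl_inj' {A B : Finset (Fin n)} (h : Aᶜ = Bᶜ) : A = B := by
  have := congrArg (·ᶜ) h
  simpa using this

lemma mem_Dd {v : Finset (Fin n)} {j : Fin n} :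
    j ∈ Dd n v ↔ ∃ k : Fin n, j = k + 1 ∧
      (v = ({k} : Finset (Fin n))ᶜ ∨ v = ({k, k+1} : Finset (Fin n))ᶜ) := by
  simp [Dd]

lemma Dd_single (hn : 3 ≤ n) (k : Fin n) : Dd n ({k} : Finset (Fin n))ᶜ = {k+1} := by
  ext j
  simp only [mem_Dd, Finset.mem_singleton]
  constructor
  · rintro ⟨k', rfl, h | h⟩
    · have : ({k} : Finset (Fin n)) = {k'} := compl_inj' h
      rw [Finset.singleton_inj.mp this]
    · have h2 : ({k} : Finset (Fin n)) = {k', k'+1} := compl_inj' h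
      have hk' : k' ∈ ({k} : Finset (Fin n)) := by rw [h2]; simp
      have hk1 : k' + 1 ∈ ({k} : Finset (Fin n)) := by rw [h2]; simp
      simp only [Finset.mem_singleton] at hk' hk1
      exact absurd (hk1.trans hk'.symm) (fin_add_one_ne hn k')
  · rintro rfl
    exact ⟨k, rfl, Or.inl rfl⟩

lemma Dd_pair (hn : 3 ≤ n) (k : Fin n) : Dd n ({k, k+1} : Finset (Fin n))ᶜ = {k+1} := by
  ext j
  simp only [mem_Dd, Finset.mem_singleton]
  constructor
  · rintro ⟨k', rfl, h | h⟩
    · have h2 : ({k, k+1} : Finset (Fin n)) = {k'} := compl_inj' h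
      have hk : k ∈ ({k'} : Finset (Fin n)) := by rw [← h2]; simp
      have hk1 : k + 1 ∈ ({k'} : Finset (Fin n)) := by rw [← h2]; simp
      simp only [Finset.mem_singleton] at hk hk1
      exact absurd (hk1.trans hk.symm) (fin_add_one_ne hn k)
    · have h2 : ({k, k+1} : Finset (Fin n)) = {k', k'+1} := compl_inj' h
      have hk' : k' ∈ ({k, k+1} : Finset (Fin n)) := by rw [h2]; simp
      simp only [Finset.mem_insert, Finset.mem_singleton] at hk'
      rcases hk' with rfl | rfl
      · rfl
      · have hk : k ∈ ({k+1, k+1+1} : Finset (Fin n)) := by rw [← h2]; simp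
        simp only [Finset.mem_insert, Finset.mem_singleton] at hk
        rcases hk with h3 | h3
        · exact absurd h3.symm (fin_add_one_ne hn k)
        · exact absurd h3.symm (fin_add_two_ne hn k)
  · rintro rfl
    exact ⟨k, rfl, Or.inr rfl⟩

lemma Dd_other {v : Finset (Fin n)}
    (h : ∀ k : Fin n, v ≠ ({k} : Finset (Fin n))ᶜ ∧ v ≠ ({k, k+1} : Finset (Fin n))ᶜ) :
    Dd n v = ∅ := by
  ext j
  simp only [mem_Dd, Finset.notMem_empty, iff_false]
  rintro ⟨k, _, h1 | h1⟩
  · exact (h k).1 h1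
  · exact (h k).2 h1

lemma Ss_single (hn : 3 ≤ n) (k : Fin n) :
    Ss n ({k} : Finset (Fin n))ᶜ = {k, k+1} := by
  rw [Ss, Dd_single hn, compl_compl]
  ext j
  simp only [Finset.mem_symmDiff, Finset.mem_singleton, Finset.mem_insert]
  have := fin_add_one_ne hn k
  constructor
  · rintro (⟨rfl, _⟩ | ⟨rfl, _⟩) <;> simp
  · rintro (rfl | rfl)
    · exact Or.inl ⟨rfl, fun h => this h.symm⟩
    · exact Or.inr ⟨rfl, fun h => this h⟩

lemma Ss_pair (hn : 3 ≤ n) (k : Fin n) :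
    Ss n ({k, k+1} : Finset (Fin n))ᶜ = {k} := by
  rw [Ss, Dd_pair hn, compl_compl]
  ext j
  simp only [Finset.mem_symmDiff, Finset.mem_singleton, Finset.mem_insert]
  have := fin_add_one_ne hn k
  constructor
  · rintro (⟨rfl | rfl, h2⟩ | ⟨rfl, h2⟩)
    · rfl
    · exact absurd rfl h2
    · exact (h2 (Or.inr rfl)).elim
  · rintro rfl
    exact Or.inl ⟨Or.inl rfl, fun h => this h.symm⟩

lemma Ss_other {v : Finset (Fin n)}
    (h : ∀ k : Fin n, v ≠ ({k} : Finset (Fin n))ᶜ ∧ v ≠ ({k, k+1} : Finset (Fin n))ᶜ) :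
    Ss n v = vᶜ := by
  rw [Ss, Dd_other h, ← Finset.bot_eq_empty, symmDiff_bot]

lemma union_eq_of_subset {J v u : Finset (Fin n)}
    (hvu : ∀ j, j ∈ v → j ∉ u → j ∈ J) (huv : ∀ j, j ∈ u → j ∉ v → j ∈ J)
    (hJu : J ⊆ u) : u = v ∪ J := by
  ext j
  simp only [Finset.mem_union]
  constructor
  · intro hj
    by_cases hv : j ∈ v
    · exact Or.inl hv
    · exact Or.inr (huv j hj hv)
  · rintro (hj | hj)
    · by_contra hu
      exact hu (hJu (hvu j hj hu))
    · exact hJu hj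

lemma sink_master (hn : 3 ≤ n) {J v u : Finset (Fin n)} (hface : symmDiff v u ⊆ J)
    (hsink : Ss n u ∩ J = ∅) :
    (u = v ∪ J) ∨ (∃ k : Fin n, u = ({k, k+1} : Finset (Fin n))ᶜ ∧
      v ∪ J = ({k} : Finset (Fin n))ᶜ ∧ k + 1 ∈ J) := by
  have F0 : ∀ j, j ∈ Ss n u → j ∉ J := by
    intro j hj hJ
    have : j ∈ Ss n u ∩ J := Finset.mem_inter.mpr ⟨hj, hJ⟩
    simp [hsink] at this
  have F1 : ∀ j, j ∈ J → j ∉ u → j ∈ Dd n u := by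
    intro j hJ hu
    by_contra hD
    exact F0 j (Finset.mem_symmDiff.mpr (Or.inl ⟨Finset.mem_compl.mpr hu, hD⟩)) hJ
  have F2 : ∀ j, j ∈ J → j ∈ u → j ∉ Dd n u := by
    intro j hJ hu hD
    exact F0 j (Finset.mem_symmDiff.mpr (Or.inr ⟨hD, by simp [hu]⟩)) hJ
  have hvu : ∀ j, j ∈ v → j ∉ u → j ∈ J := by
    intro j h1 h2; exact hface (Finset.mem_symmDiff.mpr (Or.inl ⟨h1, h2⟩))
  have huv : ∀ j, j ∈ u → j ∉ v → j ∈ J := by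
    intro j h1 h2; exact hface (Finset.mem_symmDiff.mpr (Or.inr ⟨h1, h2⟩))
  by_cases hu : ∃ k : Fin n, u = ({k} : Finset (Fin n))ᶜ ∨ u = ({k, k+1} : Finset (Fin n))ᶜ
  · obtain ⟨k, hk | hk⟩ := hu
    · -- u = {k}ᶜ : no flip can be used, J ⊆ u
      subst hk
      left
      have hD : Dd n ({k} : Finset (Fin n))ᶜ = {k+1} := Dd_single hn k
      have hk1u : k + 1 ∈ ({k} : Finset (Fin n))ᶜ := by
        simp [fin_add_one_ne hn k]
      have hk1J : k + 1 ∉ J := by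
        intro hJ
        exact F2 _ hJ hk1u (by simp [hD])
      refine union_eq_of_subset hvu huv ?_
      intro j hj
      by_contra hju
      have := F1 j hj hju
      rw [hD] at this
      simp only [Finset.mem_singleton] at this
      exact hk1J (this ▸ hj)
    · -- u = {k, k+1}ᶜ
      subst hk
      have hSs := Ss_pair hn k
      have hkJ : k ∉ J := F0 k (by rw [hSs]; simp)
      have hku : k ∉ ({k, k+1} : Finset (Fin n))ᶜ := by simp
      have hkv : k ∉ v := fun h => hkJ (hvu k h hku)
      by_cases hk1J : k + 1 ∈ J
      · right
        refine ⟨k, rfl, ?_, hk1J⟩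
        ext j
        simp only [Finset.mem_union, Finset.mem_compl, Finset.mem_singleton]
        constructor
        · rintro (hj | hj) <;> rintro rfl
          · exact hkv hj
          · exact hkJ hj
        · intro hj
          by_cases hj1 : j = k + 1
          · exact Or.inr (hj1 ▸ hk1J)
          · have hju : j ∈ ({k, k+1} : Finset (Fin n))ᶜ := by simp [hj, hj1]
            by_cases hv : j ∈ v
            · exact Or.inl hv
            · exact Or.inr (huv j hju hv)
      · left
        have hk1u : k + 1 ∉ ({k, k+1} : Finset (Fin n))ᶜ := by simp
        have hk1v : k + 1 ∉ v := fun h => hk1J (hvu _ h hk1u)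
        refine union_eq_of_subset hvu huv ?_
        intro j hj
        simp only [Finset.mem_compl, Finset.mem_insert, Finset.mem_singleton]
        push_neg
        constructor
        · rintro rfl; exact hkJ hj
        · rintro rfl; exact hk1J hj
  · left
    push_neg at hu
    have hD : Dd n u = ∅ := Dd_other (fun k => hu k)
    refine union_eq_of_subset hvu huv ?_
    intro j hj
    by_contra hju
    have := F1 j hj hju
    simp [hD] at this

lemma Ss_isUSO (hn : 3 ≤ n) : IsUSO (Ss n) := by
  intro J v
  by_cases hcase : ∃ k : Fin n, v ∪ J = ({k} : Finset (Fin n))ᶜ ∧ k + 1 ∈ J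
  · obtain ⟨k, hw0, hk1J⟩ := hcase
    have hkJ : k ∉ J := by
      intro h
      have : k ∈ v ∪ J := Finset.mem_union_right _ h
      rw [hw0] at this; simp at this
    have hkv : k ∉ v := by
      intro h
      have : k ∈ v ∪ J := Finset.mem_union_left _ h
      rw [hw0] at this; simp at this
    refine ⟨({k, k+1} : Finset (Fin n))ᶜ, ⟨?_, ?_⟩, ?_⟩
    · -- face membership
      intro j hj
      rw [Finset.mem_symmDiff] at hj
      rcases hj with ⟨hjv, hju⟩ | ⟨hju, hjv⟩
      · have hj2 : j ∈ ({k, k+1} : Finset (Fin n)) := by simp only [Finset.mem_compl, not_not] at hju; exact hju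
        rcases Finset.mem_insert.mp hj2 with rfl | h
        · exact absurd hjv hkv
        · rw [Finset.mem_singleton.mp h]; exact hk1J
      · have : j ∈ v ∪ J := by
          rw [hw0]
          simp only [Finset.mem_compl, Finset.mem_singleton]
          rintro rfl
          simp at hju
        rcases Finset.mem_union.mp this with h | h
        · exact absurd h hjv
        · exact h
    · rw [Ss_pair hn k]
      ext j; simp only [Finset.mem_inter, Finset.mem_singleton, Finset.notMem_empty, iff_false]
      rintro ⟨rfl, hj⟩
      exact hkJ hj
    · intro y ⟨hyface, hysink⟩
      rcases sink_master hn hyface hysink with hy | ⟨k', hy, hw0', hk1J'⟩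
      · exfalso
        rw [hw0] at hy
        subst hy
        have : k + 1 ∈ Ss n ({k} : Finset (Fin n))ᶜ := by
          rw [Ss_single hn k]; simp
        have := Finset.mem_inter.mpr ⟨this, hk1J⟩
        rw [hysink] at this
        simp at this
      · have : ({k} : Finset (Fin n)) = {k'} := compl_inj' (hw0 ▸ hw0')
        rw [Finset.singleton_inj.mp this]
        exact hy
  · refine ⟨v ∪ J, ⟨?_, ?_⟩, ?_⟩
    · intro j hj
      rw [Finset.mem_symmDiff] at hj
      rcases hj with ⟨hjv, hju⟩ | ⟨hju, hjv⟩
      · exact absurd (Finset.mem_union_left _ hjv) hju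
      · exact (Finset.mem_union.mp hju).resolve_left hjv
    · ext j
      simp only [Finset.mem_inter, Finset.notMem_empty, iff_false]
      rintro ⟨hjs, hjJ⟩
      have hju : j ∈ v ∪ J := Finset.mem_union_right _ hjJ
      have hjD : j ∈ Dd n (v ∪ J) := by
        rw [Ss, Finset.mem_symmDiff] at hjs
        rcases hjs with ⟨h1, _⟩ | ⟨h1, _⟩
        · exact absurd hju (Finset.mem_compl.mp h1)
        · exact h1
      rw [mem_Dd] at hjD
      obtain ⟨k, rfl, h | h⟩ := hjD
      · exact hcase ⟨k, h, hjJ⟩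
      · have : k + 1 ∉ v ∪ J := by rw [h]; simp
        exact this hju
    · intro y ⟨hyface, hysink⟩
      rcases sink_master hn hyface hysink with hy | ⟨k, _, hw0', hk1J'⟩
      · exact hy
      · exact absurd ⟨k, hw0', hk1J'⟩ hcase


lemma symmDiff_compl_left (A B : Finset (Fin n)) :
    symmDiff Aᶜ B = (symmDiff A B)ᶜ := by
  ext j
  simp only [Finset.mem_symmDiff, Finset.mem_compl]
  tauto

lemma pair_symmDiff (hn : 3 ≤ n) (k : Fin n) :
    symmDiff ({k} : Finset (Fin n)) {k+1} = {k, k+1} := by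
  have h := fin_add_one_ne hn k
  ext j
  simp only [Finset.mem_symmDiff, Finset.mem_singleton, Finset.mem_insert]
  constructor
  · rintro (⟨rfl, _⟩ | ⟨rfl, _⟩) <;> simp
  · rintro (rfl | rfl)
    · exact Or.inl ⟨rfl, fun hh => h hh.symm⟩
    · exact Or.inr ⟨rfl, fun hh => h hh⟩

lemma pair_symmDiff' (hn : 3 ≤ n) (k : Fin n) :
    symmDiff ({k, k+1} : Finset (Fin n)) {k} = {k+1} := by
  have h := fin_add_one_ne hn k
  ext j
  simp only [Finset.mem_symmDiff, Finset.mem_singleton, Finset.mem_insert]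
  constructor
  · rintro (⟨rfl | rfl, h2⟩ | ⟨rfl, h2⟩)
    · exact absurd rfl h2
    · rfl
    · exact (h2 (Or.inl rfl)).elim
  · rintro rfl
    exact Or.inl ⟨Or.inr rfl, fun hh => h hh⟩

lemma step_cycle1 (hn : 3 ≤ n) (k : Fin n) :
    USO.Step (Ss n) (({k} : Finset (Fin n))ᶜ) (({k, k+1} : Finset (Fin n))ᶜ) := by
  refine ⟨k + 1, by rw [Ss_single hn]; simp, ?_⟩
  rw [symmDiff_compl_left, pair_symmDiff hn]

lemma step_cycle2 (hn : 3 ≤ n) (k : Fin n) :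
    USO.Step (Ss n) (({k, k+1} : Finset (Fin n))ᶜ) (({k+1} : Finset (Fin n))ᶜ) := by
  refine ⟨k, by rw [Ss_pair hn]; simp, ?_⟩
  rw [symmDiff_compl_left, pair_symmDiff' hn]

lemma reach_cycle (hn : 3 ≤ n) (k : Fin n) :
    USO.Reach (Ss n) (({k} : Finset (Fin n))ᶜ) (({k+1} : Finset (Fin n))ᶜ) :=
  Relation.ReflTransGen.head (step_cycle1 hn k)
    (Relation.ReflTransGen.single (step_cycle2 hn k))

open Fin.NatCast in
lemma reach_cycle_nat (hn : 3 ≤ n) (k : Fin n) (m : ℕ) :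
    USO.Reach (Ss n) (({k} : Finset (Fin n))ᶜ) (({k + (m : Fin n)} : Finset (Fin n))ᶜ) := by
  induction m with
  | zero =>
    rw [show ((0 : ℕ) : Fin n) = 0 from Fin.ext (by simp), add_zero]
    exact Relation.ReflTransGen.refl
  | succ m ih =>
    have h2 := reach_cycle hn (k + (m : Fin n))
    have : ((m + 1 : ℕ) : Fin n) = (m : ℕ) + 1 := by push_cast; ring
    rw [this, ← add_assoc]
    exact ih.trans h2

open Fin.NatCast in
lemma reach_cycle_all (hn : 3 ≤ n) (k j : Fin n) :
    USO.Reach (Ss n) (({k} : Finset (Fin n))ᶜ) (({j} : Finset (Fin n))ᶜ) := by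
  have := reach_cycle_nat hn k (j - k).val
  rwa [Fin.cast_val_eq_self, add_comm, sub_add_cancel] at this

lemma step_up (hn : 3 ≤ n) {v : Finset (Fin n)} (hv : v ≠ Finset.univ) :
    ∃ j, j ∈ Ss n v ∧ j ∉ v := by
  by_cases h : ∃ k : Fin n, v = ({k} : Finset (Fin n))ᶜ ∨ v = ({k, k+1} : Finset (Fin n))ᶜ
  · obtain ⟨k, rfl | rfl⟩ := h
    · exact ⟨k, by rw [Ss_single hn]; simp, by simp⟩
    · exact ⟨k, by rw [Ss_pair hn]; simp, by simp⟩
  · push_neg at h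
    rw [Ss_other (fun k => h k)]
    have : vᶜ.Nonempty := by
      rw [Finset.nonempty_iff_ne_empty]
      intro hc
      exact hv (by simpa using congrArg (·ᶜ) hc)
    obtain ⟨j, hj⟩ := this
    exact ⟨j, hj, Finset.mem_compl.mp hj⟩

lemma reach_to_cycle (hn : 3 ≤ n) :
    ∀ m : ℕ, ∀ v : Finset (Fin n), v ≠ Finset.univ → vᶜ.card ≤ m →
      ∃ k : Fin n, USO.Reach (Ss n) v (({k} : Finset (Fin n))ᶜ) := by
  intro m
  induction m with
  | zero =>
    intro v hv hc
    exfalso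
    apply hv
    have : vᶜ = ∅ := Finset.card_eq_zero.mp (Nat.le_zero.mp hc)
    simpa using congrArg (·ᶜ) this
  | succ m ih =>
    intro v hv hc
    by_cases h1 : vᶜ.card = 1
    · obtain ⟨k, hk⟩ := Finset.card_eq_one.mp h1
      refine ⟨k, ?_⟩
      have : v = ({k} : Finset (Fin n))ᶜ := by
        have := congrArg (·ᶜ) hk
        simpa using this
      rw [← this]
      exact Relation.ReflTransGen.refl
    · obtain ⟨j, hjS, hjv⟩ := step_up hn hv
      have hstep : USO.Step (Ss n) v (symmDiff v {j}) := ⟨j, hjS, rfl⟩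
      have hins : symmDiff v {j} = insert j v := by
        ext x
        simp only [Finset.mem_symmDiff, Finset.mem_singleton, Finset.mem_insert]
        constructor
        · rintro (⟨h, _⟩ | ⟨rfl, _⟩)
          · exact Or.inr h
          · exact Or.inl rfl
        · rintro (rfl | h)
          · exact Or.inr ⟨rfl, hjv⟩
          · exact Or.inl ⟨h, fun hx => hjv (hx ▸ h)⟩
      have hcard : (insert j v)ᶜ.card = vᶜ.card - 1 := by
        rw [Finset.compl_insert]
        exact Finset.card_erase_of_mem (Finset.mem_compl.mpr hjv)
      have hpos : 1 ≤ vᶜ.card := by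
        rcases Nat.eq_zero_or_pos vᶜ.card with h | h
        · exfalso
          apply hv
          have : vᶜ = ∅ := Finset.card_eq_zero.mp h
          simpa using congrArg (·ᶜ) this
        · exact h
      have hne : insert j v ≠ Finset.univ := by
        intro hcu
        have : (insert j v)ᶜ.card = 0 := by rw [hcu]; simp
        omega
      obtain ⟨k, hk⟩ := ih (insert j v) hne (by omega)
      exact ⟨k, Relation.ReflTransGen.head (hins ▸ hstep) hk⟩

lemma Ss_univ_eq : Ss n (Finset.univ : Finset (Fin n)) = ∅ := by
  have hD : Dd n (Finset.univ : Finset (Fin n)) = ∅ := by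
    apply Dd_other
    intro k
    constructor
    · intro h
      have : k ∈ ({k} : Finset (Fin n))ᶜ := h ▸ Finset.mem_univ k
      simp at this
    · intro h
      have : k ∈ ({k, k+1} : Finset (Fin n))ᶜ := h ▸ Finset.mem_univ k
      simp at this
  rw [Ss, hD, Finset.compl_univ, ← Finset.bot_eq_empty, symmDiff_self]

lemma Ss_ne_empty_iff (hn : 3 ≤ n) (v : Finset (Fin n)) :
    Ss n v ≠ ∅ ↔ v ≠ Finset.univ := by
  constructor
  · intro h hv
    exact h (hv ▸ Ss_univ_eq)
  · intro hv
    obtain ⟨j, hj, _⟩ := step_up hn hv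
    exact fun hc => by simp [hc] at hj

lemma reachmap_full (hn : 3 ≤ n) {v : Finset (Fin n)} (hv : v ≠ Finset.univ) :
    reachmap (Ss n) v = Set.univ := by
  apply Set.eq_univ_iff_forall.mpr
  intro j
  obtain ⟨k, hk⟩ := reach_to_cycle hn vᶜ.card v hv le_rfl
  refine ⟨({j} : Finset (Fin n))ᶜ, hk.trans (reach_cycle_all hn k j), ?_⟩
  rw [Ss_single hn]
  simp

lemma stepN_card {s : Finset (Fin n) → Finset (Fin n)} :
    ∀ k : ℕ, ∀ v u : Finset (Fin n), USO.StepN s k v u → u.card ≤ v.card + k := by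
  intro k
  induction k with
  | zero => intro v u h; rw [h]; simp
  | succ k ih =>
    rintro v u ⟨w, ⟨j, _, rfl⟩, h2⟩
    have h3 : (symmDiff v {j}).card ≤ v.card + 1 := by
      calc (symmDiff v {j}).card ≤ (v ∪ {j}).card :=
            Finset.card_le_card symmDiff_le_sup
        _ ≤ v.card + 1 := by
            have := Finset.card_union_le v ({j} : Finset (Fin n))
            simpa using this
    have := ih _ u h2
    omega

/-- for every n (≥ 3, as cyclic USOs require at least 3 dimensions)
there is a cyclic USO in which every non-sink vertex has full reachmap [n];
in particular it is not i-nice for any i < n. -/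
theorem exists_cyclic_uso_not_nice (n : ℕ) (hn : 3 ≤ n) :
    ∃ s : Finset (Fin n) → Finset (Fin n),
      IsUSO s ∧ ¬ IsAcyclic s ∧
      (∀ v, s v ≠ ∅ → reachmap s v = Set.univ) ∧
      ∀ i, i < n → ¬ IsNice i s := by
  haveI : NeZero n := ⟨by omega⟩
  refine ⟨Ss n, Ss_isUSO hn, ?_, ?_, ?_⟩
  · intro hac
    have h01 : (0 : Fin n) ≠ 1 := by
      intro h
      have := congrArg Fin.val h
      rw [Fin.val_zero, Fin.val_one', Nat.mod_eq_of_lt (show 1 < n by omega)] at this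
      omega
    have hne : ({0} : Finset (Fin n))ᶜ ≠ ({1} : Finset (Fin n))ᶜ := by
      intro h
      exact h01 (Finset.singleton_inj.mp (compl_inj' h))
    exact hne (hac _ _ (reach_cycle_all hn 0 1) (reach_cycle_all hn 1 0))
  · intro v hv
    exact reachmap_full hn ((Ss_ne_empty_iff hn v).mp hv)
  · intro i hi hnice
    have hne : (∅ : Finset (Fin n)) ≠ Finset.univ := by
      intro h
      have := congrArg Finset.card h
      simp [Finset.card_univ] at this
      omega
    obtain ⟨u, ⟨k, hk, hstep⟩, hsub⟩ := hnice ∅ ((Ss_ne_empty_iff hn ∅).mpr hne)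
    have hcard := stepN_card k ∅ u hstep
    have hu : u ≠ Finset.univ := by
      intro h
      rw [h, Finset.card_univ] at hcard
      simp [Fintype.card_fin] at hcard
      omega
    rw [reachmap_full hn hu, reachmap_full hn hne] at hsub
    exact ssubset_irrefl _ hsub
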